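/- Let $H$ be a real Hilbert space, $x,\hat x\in\mathcal{S}$ with $F_i(\hat x)=y_i$ for all $i$, and suppose each $F_i$ satisfies the tangential cone condition with constant $0<\gamma<1$. Define $\Psi_i(x)=\frac12\|F_i(x)-y_i\|^2$ and $\Psi=\frac1N\sum_i\Psi_i$. Then $\langle \nabla\Psi(x), x-\hat x\rangle \ge 2(1-\gamma)\Psi(x)$, where $\nabla\Psi_i(x)=F_i'(x)^*(F_i(x)-y_i)$. -/

import Mathlib

open Finset

theorem weak_convexity_objective
    {H H' : Type*} [NormedAddCommGroup H] [InnerProductSpace ℝ H] [CompleteSpace H]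
    [NormedAddCommGroup H'] [InnerProductSpace ℝ H'] [CompleteSpace H']
    (N : ℕ) (hN : 0 < N) (S : Set H)
    (F : Fin N → H → H') (F' : Fin N → H → H →L[ℝ] H') (y : Fin N → H')
    (γ : ℝ) (hγ0 : 0 < γ) (hγ1 : γ < 1)
    (hTCC : ∀ i, ∀ x ∈ S, ∀ x' ∈ S,
      ‖F i x - F i x' - F' i x (x - x')‖ ≤ γ * ‖F i x - F i x'‖)
    (x xhat : H) (hx : x ∈ S) (hxhat : xhat ∈ S) (hsol : ∀ i, F i xhat = y i) :
    2 * (1 - γ) * ((N : ℝ)⁻¹ * ∑ i, (1 / 2) * ‖F i x - y i‖ ^ 2) ≤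
      inner ℝ ((N : ℝ)⁻¹ • ∑ i, (ContinuousLinearMap.adjoint (F' i x)) (F i x - y i))
        (x - xhat) := by
  have key : ∀ i, (1 - γ) * ‖F i x - y i‖ ^ 2 ≤
      inner ℝ ((ContinuousLinearMap.adjoint (F' i x)) (F i x - y i)) (x - xhat) := by
    intro i
    have hadj : (inner ℝ ((ContinuousLinearMap.adjoint (F' i x)) (F i x - y i)) (x - xhat) : ℝ)
        = inner ℝ (F i x - y i) (F' i x (x - xhat)) := by
      rw [ContinuousLinearMap.adjoint_inner_left]
    rw [hadj]
    set r := F i x - y i with hr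
    have hdecomp : (inner ℝ r (F' i x (x - xhat)) : ℝ)
        = ‖r‖ ^ 2 - inner ℝ r (r - F' i x (x - xhat)) := by
      rw [inner_sub_right, real_inner_self_eq_norm_sq]; ring
    rw [hdecomp]
    have hTCC' : ‖r - F' i x (x - xhat)‖ ≤ γ * ‖r‖ := by
      have := hTCC i x hx xhat hxhat
      rw [hsol i] at this
      simpa [hr] using this
    have hcs : (inner ℝ r (r - F' i x (x - xhat)) : ℝ) ≤ γ * ‖r‖ ^ 2 := by
      calc (inner ℝ r (r - F' i x (x - xhat)) : ℝ)
          ≤ ‖r‖ * ‖r - F' i x (x - xhat)‖ := real_inner_le_norm _ _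
        _ ≤ ‖r‖ * (γ * ‖r‖) := by
            exact mul_le_mul_of_nonneg_left hTCC' (norm_nonneg _)
        _ = γ * ‖r‖ ^ 2 := by ring
    nlinarith [sq_nonneg ‖r‖]
  rw [inner_smul_left, sum_inner]
  simp only [RCLike.conj_to_real]
  have hsum : ∑ i, (1 - γ) * ‖F i x - y i‖ ^ 2 ≤
      ∑ i, inner ℝ ((ContinuousLinearMap.adjoint (F' i x)) (F i x - y i)) (x - xhat) :=
    Finset.sum_le_sum fun i _ => key i
  have hNpos : (0 : ℝ) < (N : ℝ)⁻¹ := by positivity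
  calc 2 * (1 - γ) * ((N : ℝ)⁻¹ * ∑ i, (1 / 2) * ‖F i x - y i‖ ^ 2)
      = (N : ℝ)⁻¹ * ∑ i, (1 - γ) * ‖F i x - y i‖ ^ 2 := by
        rw [Finset.mul_sum, Finset.mul_sum, Finset.mul_sum]
        congr 1; ext i; ring
    _ ≤ (N : ℝ)⁻¹ * ∑ i, inner ℝ ((ContinuousLinearMap.adjoint (F' i x)) (F i x - y i)) (x - xhat) :=
        mul_le_mul_of_nonneg_left hsum hNpos.le
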